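/- Let G be a group with a short exact sequence 0 → K → G → H → 0 where K admits a left-invariant linear order and H admits a left-invariant circular order. Then G admits a left-invariant circular order such that the restriction to K recovers the linear order (in the sense that for k₁, k₂, k₃ ∈ K, c(k₁,k₂,k₃) is determined by the linear order on K) and the projection to H is order-preserving on triples mapping to distinct elements of H. -/

import Mathlib

/-- A circular order (as a set) on `G`: a cocycle `c : G³ → {-1,0,1}`
vanishing exactly on degenerate triples and satisfying the 2-cocycle identity. -/
def IsCircularOrder {G : Type*} (c : G → G → G → ℤ) : Prop :=
  (∀ x y z : G, c x y z = -1 ∨ c x y z = 0 ∨ c x y z = 1) ∧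
  (∀ x y z : G, c x y z = 0 ↔ (x = y ∨ y = z ∨ x = z)) ∧
  (∀ g₀ g₁ g₂ g₃ : G, c g₁ g₂ g₃ - c g₀ g₂ g₃ + c g₀ g₁ g₃ - c g₀ g₁ g₂ = 0)

/-- Invariance of a circular order under left multiplication. -/
def IsLeftInvariant {G : Type*} [Group G] (c : G → G → G → ℤ) : Prop :=
  ∀ g x y z : G, c (g * x) (g * y) (g * z) = c x y z

/-- A left-invariant linear order on a group `G`: a strict total order
invariant under left multiplication. -/
def IsLeftInvariantLinearOrder {G : Type*} [Group G] (lt : G → G → Prop) : Prop :=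
  IsStrictTotalOrder G lt ∧ ∀ f a b : G, lt a b → lt (f * a) (f * b)

/-- The circular order induced by a linear order `lt`:
`+1` on cyclically increasing triples, `-1` on cyclically decreasing ones, `0` otherwise. -/
noncomputable def circOfLinear {G : Type*} (lt : G → G → Prop) (x y z : G) : ℤ := by
  classical exact
    if (lt x y ∧ lt y z) ∨ (lt y z ∧ lt z x) ∨ (lt z x ∧ lt x y) then 1
    else if (lt x z ∧ lt z y) ∨ (lt z y ∧ lt y x) ∨ (lt y x ∧ lt x z) then -1
    else 0

/-- The `±1/0` comparison function of a linear order. -/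
noncomputable def ltZ {K : Type*} (lt : K → K → Prop) (a b : K) : ℤ := by
  classical exact if lt a b then 1 else if lt b a then -1 else 0

/-- For a strict total order, `circOfLinear` is the coboundary of `ltZ`. -/
lemma circOfLinear_eq_ltZ {K : Type*} (lt : K → K → Prop)
    (tri : ∀ a b : K, lt a b ∨ a = b ∨ lt b a)
    (irr : ∀ a : K, ¬ lt a a)
    (tr : ∀ a b c : K, lt a b → lt b c → lt a c) :
    ∀ a b c : K, circOfLinear lt a b c = ltZ lt b c - ltZ lt a c + ltZ lt a b := by
  have asym : ∀ a b : K, lt a b → ¬ lt b a := fun a b h h' => irr a (tr a b a h h')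
  intro a b c
  rcases tri a b with h1 | h1 | h1 <;> rcases tri b c with h2 | h2 | h2 <;>
    rcases tri a c with h3 | h3 | h3 <;>
    simp_all [circOfLinear, ltZ, irr, asym]
  · exact asym a c (tr a b c h1 h2) h3
  · exact asym c a (tr c b a h2 h1) h3

/-- Given a short exact sequence `0 → K → G → H → 0` with `K` left-orderable and
`H` circularly orderable, `G` admits a left-invariant circular order restricting
to the linear order on `K` and projecting to the circular order on `H`. -/
theorem circularlyOrderable_of_ses {K G H : Type*} [Group K] [Group G] [Group H]
    (f : K →* G) (π : G →* H) (hf : Function.Injective f)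
    (hπ : Function.Surjective π) (hexact : MonoidHom.range f = MonoidHom.ker π)
    (lt : K → K → Prop) (hlt : IsLeftInvariantLinearOrder lt)
    (cH : H → H → H → ℤ) (hcH : IsCircularOrder cH) (hlH : IsLeftInvariant cH) :
    ∃ c : G → G → G → ℤ, IsCircularOrder c ∧ IsLeftInvariant c ∧
      (∀ k₁ k₂ k₃ : K, c (f k₁) (f k₂) (f k₃) = circOfLinear lt k₁ k₂ k₃) ∧
      (∀ g₁ g₂ g₃ : G, π g₁ ≠ π g₂ → π g₂ ≠ π g₃ → π g₁ ≠ π g₃ →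
        c g₁ g₂ g₃ = cH (π g₁) (π g₂) (π g₃)) := by
  classical
  obtain ⟨hsto, hinv⟩ := hlt
  have tri : ∀ a b : K, lt a b ∨ a = b ∨ lt b a := fun a b => by
    by_cases h1 : lt a b
    · exact Or.inl h1
    by_cases h2 : lt b a
    · exact Or.inr (Or.inr h2)
    exact Or.inr (Or.inl (hsto.trichotomous a b h1 h2))
  have tr : ∀ a b c : K, lt a b → lt b c → lt a c := fun a b c => hsto.trans a b c
  have irr : ∀ a : K, ¬ lt a a := hsto.irrefl
  have asym : ∀ a b : K, lt a b → ¬ lt b a := fun a b h h' => irr a (tr a b a h h')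
  -- the relation `R` on `G`: the pullback order within fibers of `π`
  set R : G → G → Prop := fun a b => ∃ k : K, f k = a⁻¹ * b ∧ lt 1 k with hRdef
  have hπf : ∀ k : K, π (f k) = 1 := by
    intro k
    have : f k ∈ MonoidHom.ker π := by rw [← hexact]; exact ⟨k, rfl⟩
    exact this
  have hRπ : ∀ a b : G, R a b → π a = π b := by
    rintro a b ⟨k, hk, -⟩
    have h1 : π (a⁻¹ * b) = 1 := by rw [← hk]; exact hπf k
    have : (π a)⁻¹ * π b = 1 := by rw [← map_inv, ← map_mul]; exact h1
    exact (inv_mul_eq_one.mp this)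
  have hRne : ∀ a b : G, R a b → a ≠ b := by
    rintro a b ⟨k, hk, hk1⟩ rfl
    have : f k = f 1 := by simpa using hk
    exact irr 1 (by simpa [hf this] using hk1)
  have hRtrans : ∀ a b c : G, R a b → R b c → R a c := by
    rintro a b c ⟨k, hk, hk1⟩ ⟨k', hk', hk1'⟩
    refine ⟨k * k', ?_, ?_⟩
    · rw [map_mul, hk, hk']; group
    · have h1 : lt k (k * k') := by simpa using hinv k 1 k' hk1'
      exact tr 1 k (k * k') hk1 h1
  have hRasym : ∀ a b : G, R a b → ¬ R b a := by
    intro a b h h'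
    exact hRne a a (hRtrans a b a h h') rfl
  have hRtot : ∀ a b : G, π a = π b → a ≠ b → R a b ∨ R b a := by
    intro a b hab hne
    have h1 : π (a⁻¹ * b) = 1 := by
      rw [map_mul, map_inv, hab]; group
    have h2 : a⁻¹ * b ∈ MonoidHom.range f := by rw [hexact]; exact h1
    obtain ⟨k, hk⟩ := h2
    have hk1 : k ≠ 1 := by
      rintro rfl
      apply hne
      have : a⁻¹ * b = 1 := by rw [← hk]; simp
      exact (inv_mul_eq_one.mp this)
    rcases tri 1 k with h | h | h
    · exact Or.inl ⟨k, hk, h⟩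
    · exact absurd h.symm hk1
    · refine Or.inr ⟨k⁻¹, ?_, ?_⟩
      · rw [map_inv, hk]; group
      · have := hinv k⁻¹ k 1 h
        simpa using this
  have hRmul : ∀ g a b : G, R (g * a) (g * b) ↔ R a b := by
    intro g a b
    have : (g * a)⁻¹ * (g * b) = a⁻¹ * b := by group
    simp only [hRdef, this]
  have hRf : ∀ a b : K, R (f a) (f b) ↔ lt a b := by
    intro a b
    constructor
    · rintro ⟨k, hk, hk1⟩
      have : f k = f (a⁻¹ * b) := by rw [hk, map_mul, map_inv]
      have hk2 : k = a⁻¹ * b := hf this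
      subst hk2
      have := hinv a 1 (a⁻¹ * b) hk1
      simpa using this
    · intro h
      refine ⟨a⁻¹ * b, by rw [map_mul, map_inv], ?_⟩
      have := hinv a⁻¹ a b h
      simpa using this
  -- the partial comparison function `B` on `G`
  set B : G → G → ℤ := fun a b =>
    if π a = π b ∧ a ≠ b then (if R a b then 1 else -1) else 0 with hBdef
  have hB1 : ∀ a b : G, R a b → B a b = 1 := by
    intro a b h
    simp only [hBdef]
    rw [if_pos ⟨hRπ a b h, hRne a b h⟩, if_pos h]
  have hBm1 : ∀ a b : G, π a = π b → a ≠ b → ¬ R a b → B a b = -1 := by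
    intro a b h1 h2 h3
    simp only [hBdef]
    rw [if_pos ⟨h1, h2⟩, if_neg h3]
  have hBself : ∀ a : G, B a a = 0 := by
    intro a; simp only [hBdef]; rw [if_neg (by simp)]
  have hB0 : ∀ a b : G, π a ≠ π b → B a b = 0 := by
    intro a b h; simp only [hBdef]; rw [if_neg (by tauto)]
  have hBanti : ∀ a b : G, B b a = -B a b := by
    intro a b
    by_cases hne : a = b
    · subst hne; simp [hBself]
    by_cases hpi : π a = π b
    · rcases hRtot a b hpi hne with h | h
      · rw [hB1 a b h, hBm1 b a hpi.symm (Ne.symm hne) (hRasym a b h)]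
      · rw [hB1 b a h, hBm1 a b hpi (hne) (hRasym b a h)]; norm_num
    · rw [hB0 a b hpi, hB0 b a (fun h => hpi h.symm)]; ring
  have hBmul : ∀ g a b : G, B (g * a) (g * b) = B a b := by
    intro g a b
    have h1 : (π (g * a) = π (g * b)) ↔ (π a = π b) := by simp [map_mul]
    have h2 : (g * a ≠ g * b) ↔ (a ≠ b) := by simp
    simp only [hBdef, h1, h2, hRmul g a b]
  have hBrange : ∀ a b : G, B a b = -1 ∨ B a b = 0 ∨ B a b = 1 := by
    intro a b
    simp only [hBdef]
    split_ifs <;> simp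
  have hcH0 : ∀ x y z : H, (x = y ∨ y = z ∨ x = z) → cH x y z = 0 :=
    fun x y z h => (hcH.2.1 x y z).mpr h
  -- the circular order on G
  set c : G → G → G → ℤ := fun x y z =>
    cH (π x) (π y) (π z) + B y z - B x z + B x y with hcdef
  have hcval : ∀ x y z : G, c x y z = cH (π x) (π y) (π z) + B y z - B x z + B x y :=
    fun _ _ _ => rfl
  -- degenerate triples give 0
  have hdeg : ∀ x y z : G, (x = y ∨ y = z ∨ x = z) → c x y z = 0 := by
    intro x y z h
    rcases h with rfl | rfl | rfl
    · rw [hcval, hcH0 _ _ _ (Or.inl rfl), hBself]; ring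
    · rw [hcval, hcH0 _ _ _ (Or.inr (Or.inl rfl)), hBself]; ring
    · rw [hcval, hcH0 _ _ _ (Or.inr (Or.inr rfl)), hBself, hBanti x y]; ring
  -- nondegenerate triples give ±1
  have hval : ∀ x y z : G, x ≠ y → y ≠ z → x ≠ z → c x y z = 1 ∨ c x y z = -1 := by
    intro x y z hxy hyz hxz
    rw [hcval]
    by_cases h12 : π x = π y
    · have h0 : cH (π x) (π y) (π z) = 0 := hcH0 _ _ _ (Or.inl h12)
      by_cases h23 : π y = π z
      · -- all in the same fiber
        have h13 : π x = π z := h12.trans h23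
        rcases hRtot x y h12 hxy with hab | hab <;>
          rcases hRtot y z h23 hyz with hbc | hbc <;>
          rcases hRtot x z h13 hxz with hac | hac
        · rw [h0, hB1 _ _ hab, hB1 _ _ hbc, hB1 _ _ hac]; left; ring
        · exact absurd (hRtrans x y z hab hbc) (hRasym z x hac)
        · rw [h0, hB1 _ _ hab, hB1 _ _ hac,
            hBm1 y z h23 hyz (hRasym z y hbc)]; right; ring
        · rw [h0, hB1 _ _ hab, hBm1 y z h23 hyz (hRasym z y hbc),
            hBm1 x z h13 hxz (hRasym z x hac)]; left; ring
        · rw [h0, hB1 _ _ hbc, hB1 _ _ hac,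
            hBm1 x y h12 hxy (hRasym y x hab)]; right; ring
        · rw [h0, hB1 _ _ hbc, hBm1 x y h12 hxy (hRasym y x hab),
            hBm1 x z h13 hxz (hRasym z x hac)]; left; ring
        · exact absurd (hRtrans z y x hbc hab) (hRasym x z hac)
        · rw [h0, hBm1 x y h12 hxy (hRasym y x hab),
            hBm1 y z h23 hyz (hRasym z y hbc),
            hBm1 x z h13 hxz (hRasym z x hac)]; right; ring
      · -- π x = π y ≠ π z
        have h13 : π x ≠ π z := fun h => h23 (h12.symm.trans h)
        rw [h0, hB0 y z h23, hB0 x z h13]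
        rcases hRtot x y h12 hxy with h | h
        · rw [hB1 _ _ h]; left; ring
        · rw [hBm1 x y h12 hxy (hRasym y x h)]; right; ring
    · by_cases h23 : π y = π z
      · -- π y = π z ≠ π x
        have h13 : π x ≠ π z := fun h => h12 (h.trans h23.symm)
        rw [hcH0 _ _ _ (Or.inr (Or.inl h23)), hB0 x y h12, hB0 x z h13]
        rcases hRtot y z h23 hyz with h | h
        · rw [hB1 _ _ h]; left; ring
        · rw [hBm1 y z h23 hyz (hRasym z y h)]; right; ring
      · by_cases h13 : π x = π z
        · -- π x = π z ≠ π y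
          rw [hcH0 _ _ _ (Or.inr (Or.inr h13)), hB0 x y h12, hB0 y z h23]
          rcases hRtot x z h13 hxz with h | h
          · rw [hB1 _ _ h]; right; ring
          · rw [hBm1 x z h13 hxz (hRasym z x h)]; left; ring
        · -- all π distinct
          rw [hB0 x y h12, hB0 y z h23, hB0 x z h13]
          rcases hcH.1 (π x) (π y) (π z) with h | h | h
          · right; rw [h]; ring
          · exact absurd ((hcH.2.1 _ _ _).mp h) (by tauto)
          · left; rw [h]; ring
  refine ⟨c, ⟨?_, ?_, ?_⟩, ?_, ?_, ?_⟩
  · -- range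
    intro x y z
    by_cases h : x = y ∨ y = z ∨ x = z
    · exact Or.inr (Or.inl (hdeg x y z h))
    · push_neg at h
      rcases hval x y z h.1 h.2.1 h.2.2 with h' | h'
      · exact Or.inr (Or.inr h')
      · exact Or.inl h'
  · -- vanishing iff degenerate
    intro x y z
    constructor
    · intro h
      by_contra hc
      push_neg at hc
      rcases hval x y z hc.1 hc.2.1 hc.2.2 with h' | h' <;> omega
    · exact hdeg x y z
  · -- cocycle
    intro g₀ g₁ g₂ g₃
    have H := hcH.2.2 (π g₀) (π g₁) (π g₂) (π g₃)
    simp only [hcval]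
    omega
  · -- left invariance
    intro g x y z
    simp only [hcval, map_mul, hlH (π g), hBmul]
  · -- restriction to K
    intro k₁ k₂ k₃
    have hBf : ∀ a b : K, B (f a) (f b) = ltZ lt a b := by
      intro a b
      by_cases hab : a = b
      · subst hab; rw [hBself]; simp [ltZ, irr]
      · have hfe : f a ≠ f b := fun h => hab (hf h)
        have hpe : π (f a) = π (f b) := by rw [hπf, hπf]
        rcases tri a b with h | h | h
        · rw [hB1 _ _ ((hRf a b).mpr h)]; simp [ltZ, h]
        · exact absurd h hab
        · rw [hBm1 _ _ hpe hfe (fun h' => asym b a h ((hRf a b).mp h'))]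
          simp [ltZ, h, asym b a h]
    rw [hcval, hπf, hπf, hπf, hcH0 _ _ _ (Or.inl rfl), hBf, hBf, hBf,
      circOfLinear_eq_ltZ lt tri irr tr]
    ring
  · -- projection to H
    intro g₁ g₂ g₃ h12 h23 h13
    rw [hcval, hB0 _ _ h23, hB0 _ _ h13, hB0 _ _ h12]
    ring
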